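/- Let a > 0 and let F : ℝ⁴ → ℝ⁴ be the vector field F(q₁, q₂, v₁, v₂) = (v₁, v₂, −2q₁ + q₂ + q₂² − 2q₁q₂, a(−2q₂ + q₁ + 2q₁q₂ − q₁²)). The Jacobian matrix of F at the equilibrium (−2, −1, 0, 0) has characteristic polynomial X⁴ + 6aX² − 9a; its eigenvalues are the real pair ±√(3√(a² + a) − 3a) and the purely imaginary pair ±i√(3√(a² + a) + 3a). In particular √(3√(a² + a) − 3a) > 0 is a real positive eigenvalue, so the equilibrium (−2, −1) is linearly unstable, with one stable, one unstable and a two-dimensional centre direction. -/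

import Mathlib

open Polynomial

/-- The vector field `F(q₁, q₂, v₁, v₂) =
(v₁, v₂, -2q₁ + q₂ + q₂² - 2q₁q₂, a(-2q₂ + q₁ + 2q₁q₂ - q₁²))` on ℝ⁴ governing
the symmetric invariant manifold of the 6-particle alternating FPU α-chain
(α = 1, m = 1/a). -/
def fpuField (a : ℝ) (x : Fin 4 → ℝ) : Fin 4 → ℝ :=
  ![x 2, x 3,
    -2 * x 0 + x 1 + (x 1) ^ 2 - 2 * x 0 * x 1,
    a * (-2 * x 1 + x 0 + 2 * x 0 * x 1 - (x 0) ^ 2)]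

/-- The Jacobian matrix of a map `ℝ⁴ → ℝ⁴` at the point `x`. -/
noncomputable def jacobian (F : (Fin 4 → ℝ) → Fin 4 → ℝ) (x : Fin 4 → ℝ) :
    Matrix (Fin 4) (Fin 4) ℝ :=
  Matrix.of fun i j => fderiv ℝ F x (Pi.single j 1) i

noncomputable def fpuPr (i : Fin 4) : (Fin 4 → ℝ) →L[ℝ] ℝ :=
  ContinuousLinearMap.proj i

noncomputable def fpuL (a : ℝ) : (Fin 4 → ℝ) →L[ℝ] (Fin 4 → ℝ) :=
  ContinuousLinearMap.pi
    ![fpuPr 2, fpuPr 3, (3 : ℝ) • fpuPr 1, (3 * a) • fpuPr 0 + (-(6 * a)) • fpuPr 1]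

lemma fpu_hasFDerivAt (a : ℝ) :
    HasFDerivAt (fpuField a) (fpuL a) ![-2, -1, 0, 0] := by
  set p : Fin 4 → ℝ := ![-2, -1, 0, 0] with hp
  have h0 : HasFDerivAt (fun x : Fin 4 → ℝ => x 0) (fpuPr 0) p := hasFDerivAt_apply 0 p
  have h1 : HasFDerivAt (fun x : Fin 4 → ℝ => x 1) (fpuPr 1) p := hasFDerivAt_apply 1 p
  apply hasFDerivAt_pi''
  intro i
  rw [fpuL, ContinuousLinearMap.proj_pi]
  fin_cases i
  · exact (hasFDerivAt_apply 2 p).congr_of_eventuallyEq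
      (Filter.Eventually.of_forall fun x => by simp [fpuField])
  · exact (hasFDerivAt_apply 3 p).congr_of_eventuallyEq
      (Filter.Eventually.of_forall fun x => by simp [fpuField])
  · have h : HasFDerivAt (fun x : Fin 4 → ℝ =>
        -2 * x 0 + x 1 + x 1 * x 1 - 2 * x 0 * x 1) _ p :=
      (((h0.const_mul (-2)).add h1).add (h1.mul h1)).sub ((h0.const_mul 2).mul h1)
    refine (h.congr_fderiv ?_).congr_of_eventuallyEq
      (Filter.Eventually.of_forall fun x => by simp [fpuField, -mul_eq_mul_left_iff]; ring)
    ext v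
    have e0 : p 0 = -2 := rfl
    have e1 : p 1 = -1 := rfl
    simp [e0, e1, fpuPr]
    ring
  · have h : HasFDerivAt (fun x : Fin 4 → ℝ =>
        a * (-2 * x 1 + x 0 + 2 * x 0 * x 1 - x 0 * x 0)) _ p :=
      ((((h1.const_mul (-2)).add h0).add ((h0.const_mul 2).mul h1)).sub
        (h0.mul h0)).const_mul a
    refine (h.congr_fderiv ?_).congr_of_eventuallyEq
      (Filter.Eventually.of_forall fun x => by simp [fpuField, -mul_eq_mul_left_iff]; ring)
    ext v
    have e0 : p 0 = -2 := rfl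
    have e1 : p 1 = -1 := rfl
    simp [e0, e1, fpuPr]
    ring

lemma fpu_jac_eq (a : ℝ) : jacobian (fpuField a) ![-2, -1, 0, 0] =
    !![0,0,1,0; 0,0,0,1; 0,3,0,0; 3*a,-6*a,0,0] := by
  have h := (fpu_hasFDerivAt a).fderiv
  ext i j
  rw [jacobian]
  simp only [Matrix.of_apply, h]
  fin_cases i <;> fin_cases j <;>
    simp [fpuL, fpuPr, Pi.single_apply, Matrix.vecHead, Matrix.vecTail, Function.comp]

lemma fpu_charpoly (a : ℝ) :
    (!![0,0,1,0; 0,0,0,1; 0,3,0,0; 3*a,-6*a,0,0] : Matrix (Fin 4) (Fin 4) ℝ).charpoly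
      = X ^ 4 + C (6 * a) * X ^ 2 - C (9 * a) := by
  have hM : Matrix.charmatrix (!![0,0,1,0; 0,0,0,1; 0,3,0,0; 3*a,-6*a,0,0] :
      Matrix (Fin 4) (Fin 4) ℝ)
      = !![X, 0, -1, 0; 0, X, 0, -1; 0, -(C 3), X, 0; -(C (3*a)), C (6*a), 0, X] := by
    ext i j
    fin_cases i <;> fin_cases j <;>
      simp [Matrix.charmatrix_apply, Matrix.diagonal_apply, map_neg,
        Matrix.vecHead, Matrix.vecTail, Function.comp]
  rw [Matrix.charpoly, hM]
  simp [Matrix.det_succ_row_zero, Fin.sum_univ_succ, Matrix.vecHead, Matrix.vecTail,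
    Function.comp]
  rw [show (Fin.succAbove (2 : Fin 4) (2 : Fin 3)) = 3 from rfl]
  simp
  ring_nf
  have h9 : (C (3:ℝ)) ^ 2 = C 9 := by rw [← C_pow]; norm_num
  rw [h9]

lemma fpu_roots (a : ℝ) (ha : 0 < a) :
    ((X ^ 4 + C (6 * a) * X ^ 2 - C (9 * a) : ℝ[X]).map (algebraMap ℝ ℂ)).roots =
      {((Real.sqrt (3 * Real.sqrt (a ^ 2 + a) - 3 * a) : ℝ) : ℂ),
        -((Real.sqrt (3 * Real.sqrt (a ^ 2 + a) - 3 * a) : ℝ) : ℂ),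
        Complex.I * ((Real.sqrt (3 * Real.sqrt (a ^ 2 + a) + 3 * a) : ℝ) : ℂ),
        -(Complex.I * ((Real.sqrt (3 * Real.sqrt (a ^ 2 + a) + 3 * a) : ℝ) : ℂ))} := by
  set u : ℂ := ((Real.sqrt (3 * Real.sqrt (a ^ 2 + a) - 3 * a) : ℝ) : ℂ) with hu
  set v : ℂ := Complex.I * ((Real.sqrt (3 * Real.sqrt (a ^ 2 + a) + 3 * a) : ℝ) : ℂ) with hv
  have hnn : (0:ℝ) ≤ a ^ 2 + a := by positivity
  have hlt : a < Real.sqrt (a ^ 2 + a) := by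
    nlinarith [Real.sq_sqrt hnn, Real.sqrt_nonneg (a^2+a), sq_nonneg (Real.sqrt (a^2+a) - a)]
  have hu2 : u ^ 2 = ((3 * Real.sqrt (a ^ 2 + a) - 3 * a : ℝ) : ℂ) := by
    rw [hu, ← Complex.ofReal_pow, Real.sq_sqrt (by linarith)]
  have hv2 : v ^ 2 = -((3 * Real.sqrt (a ^ 2 + a) + 3 * a : ℝ) : ℂ) := by
    rw [hv, mul_pow, Complex.I_sq, ← Complex.ofReal_pow,
      Real.sq_sqrt (by positivity), neg_one_mul]
  have hsq : Real.sqrt (a ^ 2 + a) ^ 2 = a ^ 2 + a := Real.sq_sqrt hnn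
  have hfact : ((X ^ 4 + C (6 * a) * X ^ 2 - C (9 * a) : ℝ[X]).map (algebraMap ℝ ℂ)) =
      (X - C u) * (X - C (-u)) * (X - C v) * (X - C (-v)) := by
    have h1 : (X - C u) * (X - C (-u)) * (X - C v) * (X - C (-v)) =
        X ^ 4 - C (u ^ 2 + v ^ 2) * X ^ 2 + C (u ^ 2 * v ^ 2) := by
      simp only [map_add, map_mul, map_neg, C_pow]
      ring
    have h2 : u ^ 2 + v ^ 2 = -(((6 * a : ℝ)) : ℂ) := by
      rw [hu2, hv2]; push_cast; ring
    have hr : (3 * Real.sqrt (a ^ 2 + a) - 3 * a) * (3 * Real.sqrt (a ^ 2 + a) + 3 * a)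
        = 9 * a := by nlinarith [hsq]
    have h3 : u ^ 2 * v ^ 2 = -(((9 * a : ℝ)) : ℂ) := by
      rw [hu2, hv2, mul_neg, ← Complex.ofReal_mul, hr]
    rw [h1, h2, h3]
    simp only [map_neg, Polynomial.map_add, Polynomial.map_sub, Polynomial.map_mul,
      Polynomial.map_pow, Polynomial.map_X, map_C, Complex.coe_algebraMap]
    ring
  rw [hfact]
  have hne : ∀ c : ℂ, (X - C c) ≠ 0 := fun c => X_sub_C_ne_zero c
  rw [roots_mul (mul_ne_zero (mul_ne_zero (mul_ne_zero (hne u) (hne (-u))) (hne v)) (hne (-v))),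
    roots_mul (mul_ne_zero (mul_ne_zero (hne u) (hne (-u))) (hne v)),
    roots_mul (mul_ne_zero (hne u) (hne (-u))),
    roots_X_sub_C, roots_X_sub_C, roots_X_sub_C, roots_X_sub_C]
  rfl

/-- At the equilibrium `(-2, -1, 0, 0)` of the vector field `F`, the Jacobian
has characteristic polynomial `X⁴ + 6aX² - 9a`, whose (complex) roots, i.e.
the eigenvalues, are the real pair `±√(3√(a² + a) - 3a)` and the purely
imaginary pair `±i√(3√(a² + a) + 3a)`; in particular `√(3√(a² + a) - 3a) > 0`
is a real positive eigenvalue, so the equilibrium `(-2, -1)` is linearly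
unstable, with one stable, one unstable and a two-dimensional centre
direction. -/
theorem jacobian_at_negtwo_negone (a : ℝ) (ha : 0 < a) :
    fpuField a ![-2, -1, 0, 0] = 0 ∧
    (jacobian (fpuField a) ![-2, -1, 0, 0]).charpoly =
      X ^ 4 + C (6 * a) * X ^ 2 - C (9 * a) ∧
    ((jacobian (fpuField a) ![-2, -1, 0, 0]).charpoly.map (algebraMap ℝ ℂ)).roots =
      {((Real.sqrt (3 * Real.sqrt (a ^ 2 + a) - 3 * a) : ℝ) : ℂ),
        -((Real.sqrt (3 * Real.sqrt (a ^ 2 + a) - 3 * a) : ℝ) : ℂ),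
        Complex.I * ((Real.sqrt (3 * Real.sqrt (a ^ 2 + a) + 3 * a) : ℝ) : ℂ),
        -(Complex.I * ((Real.sqrt (3 * Real.sqrt (a ^ 2 + a) + 3 * a) : ℝ) : ℂ))} ∧
    0 < Real.sqrt (3 * Real.sqrt (a ^ 2 + a) - 3 * a) := by
  have hcp : (jacobian (fpuField a) ![-2, -1, 0, 0]).charpoly =
      X ^ 4 + C (6 * a) * X ^ 2 - C (9 * a) := by
    rw [fpu_jac_eq a]; exact fpu_charpoly a
  have hnn : (0:ℝ) ≤ a ^ 2 + a := by positivity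
  have hlt : a < Real.sqrt (a ^ 2 + a) := by
    nlinarith [Real.sq_sqrt hnn, Real.sqrt_nonneg (a^2+a), sq_nonneg (Real.sqrt (a^2+a) - a)]
  refine ⟨?_, hcp, by rw [hcp]; exact fpu_roots a ha, Real.sqrt_pos.2 (by linarith)⟩
  funext i
  fin_cases i <;> norm_num [fpuField] <;> rfl
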